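/- Given s > 2 and fixed digits c_1,…,c_n ∈ {1,…,s-1}, the infimum of the cylinder Δ'_{c_1…c_n} (the set of all x = Σ_{k=1}^∞ c_k'/s^{c_1'+⋯+c_k'} with c_k' = c_k for k ≤ n) equals g_n + (s-1)/(s^{c_1+⋯+c_n}(s^{s-1}-1)), where g_n = Σ_{k=1}^n c_k/s^{c_1+⋯+c_k}; this infimum is attained by the sequence continuing with c_k = s-1 for all k > n. -/

import Mathlib

open Finset

/-- The term of the series: `c n / s ^ (c 1 + ... + c (n+1))` (0-indexed). -/
noncomputable def sTerm (s : ℕ) (c : ℕ → ℕ) (n : ℕ) : ℝ :=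
  (c n : ℝ) / (s : ℝ) ^ (∑ k ∈ Finset.range (n + 1), c k)

/-- `x = Σ_{k=1}^∞ c_k / s^{c_1+⋯+c_k}`. -/
noncomputable def sVal (s : ℕ) (c : ℕ → ℕ) : ℝ := ∑' n : ℕ, sTerm s c n

/-- The sequence `(c_k)` has all terms in `{1, ..., s-1}`. -/
def sValid (s : ℕ) (c : ℕ → ℕ) : Prop := ∀ k, 1 ≤ c k ∧ c k ≤ s - 1

/-- The set `S_{(s,0)}`. -/
def Sset (s : ℕ) : Set ℝ := { x | ∃ c : ℕ → ℕ, sValid s c ∧ x = sVal s c }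

/-- The cylinder `Δ'_{c_1 ... c_n}` of rank `n` with base the first `n` terms of `c`. -/
def cyl (s n : ℕ) (c : ℕ → ℕ) : Set ℝ :=
  { x | ∃ c' : ℕ → ℕ, sValid s c' ∧ (∀ k < n, c' k = c k) ∧ x = sVal s c' }

/-- The cylinder `Δ'_{c_1 ... c_n p}`: prefix of length `n` from `c`, next digit `p`. -/
def cylExt (s n : ℕ) (c : ℕ → ℕ) (p : ℕ) : Set ℝ :=
  { x | ∃ c' : ℕ → ℕ, sValid s c' ∧ (∀ k < n, c' k = c k) ∧ c' n = p ∧ x = sVal s c' }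

/-- `g_n = Σ_{k=1}^n c_k / s^{c_1+⋯+c_k}`. -/
noncomputable def gPart (s n : ℕ) (c : ℕ → ℕ) : ℝ := ∑ k ∈ Finset.range n, sTerm s c k

lemma sTerm_nonneg (s : ℕ) (c : ℕ → ℕ) (n : ℕ) : 0 ≤ sTerm s c n := by
  unfold sTerm; positivity

lemma summable_sTerm {s : ℕ} (hs : 2 < s) {c : ℕ → ℕ} (hc : sValid s c) :
    Summable (sTerm s c) := by
  have hs1 : (1:ℝ) < s := by exact_mod_cast by omega
  have hs0 : (0:ℝ) < s := by linarith
  apply Summable.of_nonneg_of_le (f := fun n => (1/(s:ℝ))^n)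
    (fun n => sTerm_nonneg s c n) ?_ ?_
  · intro n
    have h1 : (n+1 : ℕ) ≤ ∑ k ∈ range (n+1), c k := by
      calc (n+1:ℕ) = ∑ k ∈ range (n+1), 1 := by simp
      _ ≤ _ := Finset.sum_le_sum fun k _ => (hc k).1
    have hcn : (c n : ℝ) ≤ s := by
      have := (hc n).2; exact_mod_cast by omega
    have hpow : (s:ℝ)^(n+1) ≤ (s:ℝ)^(∑ k ∈ range (n+1), c k) :=
      pow_le_pow_right₀ hs1.le h1
    show sTerm s c n ≤ (1/(s:ℝ))^n
    rw [div_pow, one_pow]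
    unfold sTerm
    calc (c n : ℝ) / (s:ℝ)^(∑ k ∈ range (n+1), c k)
        ≤ (s:ℝ) / (s:ℝ)^(n+1) := by
          apply div_le_div₀ (by positivity) hcn (by positivity) hpow
      _ = 1 / (s:ℝ)^n := by rw [pow_succ]; field_simp
  · exact summable_geometric_of_lt_one (by positivity) (by rw [div_lt_one hs0]; linarith)

lemma sTerm_shift (s n : ℕ) (c : ℕ → ℕ) (k : ℕ) :
    sTerm s c (n + k) = (1 / (s:ℝ) ^ (∑ j ∈ range n, c j)) * sTerm s (fun m => c (n + m)) k := by
  unfold sTerm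
  rw [show n + k + 1 = n + (k+1) by ring, Finset.sum_range_add, pow_add]
  simp only [div_eq_mul_inv, mul_inv, one_div]
  ring

lemma sVal_split {s : ℕ} (hs : 2 < s) {c : ℕ → ℕ} (hc : sValid s c) (n : ℕ) :
    sVal s c = (∑ k ∈ range n, sTerm s c k)
      + (1/(s:ℝ)^(∑ k ∈ range n, c k)) * sVal s (fun m => c (n + m)) := by
  have hsum := summable_sTerm hs hc
  rw [sVal, ← Summable.sum_add_tsum_nat_add n hsum]
  congr 1
  rw [sVal, ← tsum_mul_left]
  refine tsum_congr fun k => ?_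
  rw [add_comm k n, sTerm_shift s n c k]

lemma sVal_const {s : ℕ} (hs : 2 < s) :
    sVal s (fun _ => s - 1) = ((s:ℝ) - 1) / ((s:ℝ)^(s-1) - 1) := by
  have hs1 : (1:ℝ) < s := by exact_mod_cast by omega
  have hQ : (1:ℝ) < (s:ℝ)^(s-1) := one_lt_pow₀ hs1 (by omega)
  have hcast : ((s - 1 : ℕ) : ℝ) = (s:ℝ) - 1 := by
    rw [Nat.cast_sub (by omega : 1 ≤ s), Nat.cast_one]
  have hterm : ∀ k, sTerm s (fun _ => s - 1) k
      = ((s:ℝ) - 1) * (1/(s:ℝ)^(s-1)) * (1/(s:ℝ)^(s-1))^k := by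
    intro k
    unfold sTerm
    simp only [Finset.sum_const, Finset.card_range, smul_eq_mul]
    rw [hcast, pow_mul']
    rw [div_eq_mul_inv, ← inv_pow, pow_succ]
    ring_nf
  rw [sVal]
  rw [tsum_congr hterm, tsum_mul_left,
    tsum_geometric_of_lt_one (by positivity) (by rw [div_lt_one (by linarith)]; linarith)]
  have h1 : (s:ℝ)^(s-1) ≠ 0 := by positivity
  have h2 : (s:ℝ)^(s-1) - 1 ≠ 0 := by linarith
  field_simp

lemma key_ineq {s d : ℕ} (hs : 2 < s) (hd1 : 1 ≤ d) (hd : d ≤ s - 1) :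
    ((s:ℝ) - 1) * ((s:ℝ)^d - 1) ≤ (d:ℝ) * ((s:ℝ)^(s-1) - 1) := by
  have hs1 : (1:ℝ) < (s:ℝ) := by exact_mod_cast by omega
  have hcast : ((s - 1 : ℕ) : ℝ) = (s:ℝ) - 1 := by
    rw [Nat.cast_sub (by omega : 1 ≤ s), Nat.cast_one]
  rw [← hcast, ← geom_sum_mul (s:ℝ) d, ← geom_sum_mul (s:ℝ) (s-1)]
  set x : ℝ := (s:ℝ)
  have hGd : (∑ i ∈ range d, x ^ i) ≤ (d:ℝ) * x ^ d := by
    calc (∑ i ∈ range d, x ^ i) ≤ ∑ i ∈ range d, x ^ d :=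
          Finset.sum_le_sum fun i hi => pow_le_pow_right₀ hs1.le (Finset.mem_range.mp hi).le
      _ = (d:ℝ) * x ^ d := by rw [Finset.sum_const, Finset.card_range, nsmul_eq_mul]
  have hIco : (((s-1:ℕ):ℝ) - d) * x ^ d ≤ ∑ i ∈ Finset.Ico d (s-1), x ^ i := by
    calc (((s-1:ℕ):ℝ) - d) * x ^ d = ∑ i ∈ Finset.Ico d (s-1), x ^ d := by
          rw [Finset.sum_const, Nat.card_Ico, nsmul_eq_mul, Nat.cast_sub hd]
      _ ≤ _ := Finset.sum_le_sum fun i hi => pow_le_pow_right₀ hs1.le (Finset.mem_Ico.mp hi).1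
  have hsplit : (∑ i ∈ range (s-1), x ^ i)
      = (∑ i ∈ range d, x ^ i) + ∑ i ∈ Finset.Ico d (s-1), x ^ i := by
    simp only [Finset.range_eq_Ico]
    exact (Finset.sum_Ico_consecutive (fun i => x ^ i) (Nat.zero_le d) hd).symm
  have hd0 : (0:ℝ) < d := by exact_mod_cast hd1
  have hed : (d:ℝ) ≤ ((s-1:ℕ):ℝ) := by exact_mod_cast hd
  have hmain : ((s-1:ℕ):ℝ) * (∑ i ∈ range d, x ^ i)
      ≤ (d:ℝ) * (∑ i ∈ range (s-1), x ^ i) := by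
    have h1 := mul_le_mul_of_nonneg_left hGd (sub_nonneg.mpr hed)
    have h2 := mul_le_mul_of_nonneg_left hIco hd0.le
    rw [hsplit]
    nlinarith
  have hx1 : (0:ℝ) ≤ x - 1 := by linarith
  nlinarith [mul_le_mul_of_nonneg_right hmain hx1]

lemma step_ineq {s d : ℕ} (hs : 2 < s) (hd1 : 1 ≤ d) (hd : d ≤ s - 1) :
    ((s:ℝ) - 1) / ((s:ℝ)^(s-1) - 1)
      ≤ (d:ℝ)/(s:ℝ)^d + (((s:ℝ) - 1) / ((s:ℝ)^(s-1) - 1))/(s:ℝ)^d := by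
  have hs1 : (1:ℝ) < (s:ℝ) := by exact_mod_cast by omega
  have hQ : (1:ℝ) < (s:ℝ)^(s-1) := one_lt_pow₀ hs1 (by omega)
  have hQ1 : (0:ℝ) < (s:ℝ)^(s-1) - 1 := by linarith
  have hxd : (0:ℝ) < (s:ℝ)^d := by positivity
  have h1 : ((s:ℝ)-1)/((s:ℝ)^(s-1)-1) * ((s:ℝ)^d - 1) ≤ d := by
    rw [div_mul_eq_mul_div, div_le_iff₀ hQ1]
    exact key_ineq hs hd1 hd
  rw [← add_div, le_div_iff₀ hxd]
  linarith

lemma partial_bound {s : ℕ} (hs : 2 < s) {c : ℕ → ℕ} (hc : sValid s c) (m : ℕ) :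
    ((s:ℝ) - 1) / ((s:ℝ)^(s-1) - 1)
      ≤ (∑ k ∈ range m, sTerm s c k)
        + (((s:ℝ) - 1) / ((s:ℝ)^(s-1) - 1)) / (s:ℝ)^(∑ k ∈ range m, c k) := by
  set L : ℝ := ((s:ℝ) - 1) / ((s:ℝ)^(s-1) - 1) with hL
  have hs0 : (0:ℝ) < s := by exact_mod_cast by omega
  induction m with
  | zero => simp
  | succ m ih =>
    rw [Finset.sum_range_succ, Finset.sum_range_succ (f := c)]
    have key : L / (s:ℝ)^(∑ k ∈ range m, c k)
        ≤ sTerm s c m + L / (s:ℝ)^(∑ k ∈ range m, c k + c m) := by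
      have hS : (0:ℝ) < (s:ℝ)^(∑ k ∈ range m, c k) := by positivity
      have hT : (0:ℝ) < (s:ℝ)^(c m) := by positivity
      calc L / (s:ℝ)^(∑ k ∈ range m, c k)
          ≤ ((c m : ℝ)/(s:ℝ)^(c m) + L/(s:ℝ)^(c m)) / (s:ℝ)^(∑ k ∈ range m, c k) := by
            gcongr
            exact step_ineq hs (hc m).1 (hc m).2
        _ = sTerm s c m + L / (s:ℝ)^(∑ k ∈ range m, c k + c m) := by
            unfold sTerm
            rw [Finset.sum_range_succ, pow_add, ← add_div, div_div, add_div]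
            ring
    linarith

lemma sVal_ge {s : ℕ} (hs : 2 < s) {c : ℕ → ℕ} (hc : sValid s c) :
    ((s:ℝ) - 1) / ((s:ℝ)^(s-1) - 1) ≤ sVal s c := by
  set L : ℝ := ((s:ℝ) - 1) / ((s:ℝ)^(s-1) - 1) with hL
  have hs1 : (1:ℝ) < (s:ℝ) := by exact_mod_cast by omega
  have hQ : (1:ℝ) < (s:ℝ)^(s-1) := one_lt_pow₀ hs1 (by omega)
  have hL0 : 0 ≤ L := by
    apply div_nonneg <;> linarith
  have hbound : ∀ m : ℕ, L - L / (s:ℝ)^m ≤ sVal s c := by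
    intro m
    have hpb := partial_bound hs hc m
    have hσ : m ≤ ∑ k ∈ range m, c k := by
      calc m = ∑ k ∈ range m, 1 := by simp
        _ ≤ _ := Finset.sum_le_sum fun k _ => (hc k).1
    have h1 : L / (s:ℝ)^(∑ k ∈ range m, c k) ≤ L / (s:ℝ)^m :=
      div_le_div_of_nonneg_left hL0 (by positivity) (pow_le_pow_right₀ hs1.le hσ)
    have h2 : (∑ k ∈ range m, sTerm s c k) ≤ sVal s c :=
      Summable.sum_le_tsum _ (fun k _ => sTerm_nonneg s c k) (summable_sTerm hs hc)
    linarith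
  have hlim : Filter.Tendsto (fun m : ℕ => L - L / (s:ℝ)^m) Filter.atTop (nhds L) := by
    have h0 : Filter.Tendsto (fun m : ℕ => L / (s:ℝ)^m) Filter.atTop (nhds 0) := by
      simp only [div_eq_mul_inv, ← inv_pow]
      rw [show (0:ℝ) = L * 0 by ring]
      exact Filter.Tendsto.const_mul L (tendsto_pow_atTop_nhds_zero_of_lt_one
        (by positivity) (by rw [inv_lt_one_iff₀]; right; linarith))
    simpa using Filter.Tendsto.sub (tendsto_const_nhds (x := L)) h0
  exact le_of_tendsto' hlim hbound

theorem stmt3 (s n : ℕ) (hs : 2 < s) (c : ℕ → ℕ) (hc : ∀ k < n, 1 ≤ c k ∧ c k ≤ s - 1) :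
    IsLeast (cyl s n c)
      (gPart s n c +
        ((s : ℝ) - 1) / ((s : ℝ) ^ (∑ k ∈ Finset.range n, c k) * ((s : ℝ) ^ (s - 1) - 1))) ∧
      gPart s n c +
          ((s : ℝ) - 1) / ((s : ℝ) ^ (∑ k ∈ Finset.range n, c k) * ((s : ℝ) ^ (s - 1) - 1)) =
        sVal s (fun k => if k < n then c k else s - 1) := by
  have hs1 : (1:ℝ) < (s:ℝ) := by exact_mod_cast by omega
  set L : ℝ := ((s:ℝ) - 1) / ((s:ℝ)^(s-1) - 1) with hL
  set A : ℕ := ∑ k ∈ Finset.range n, c k with hA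
  have htarget : ((s:ℝ)-1)/((s:ℝ)^A * ((s:ℝ)^(s-1)-1)) = (1/(s:ℝ)^A) * L := by
    rw [hL, one_div, div_eq_mul_inv, div_eq_mul_inv, mul_inv]
    ring
  -- prefix equality helper
  have hterm_pre : ∀ (d : ℕ → ℕ), (∀ k < n, d k = c k) →
      (∀ k ∈ Finset.range n, sTerm s d k = sTerm s c k) ∧
        (∑ k ∈ Finset.range n, d k = A) := by
    intro d hd
    constructor
    · intro k hk
      rw [Finset.mem_range] at hk
      unfold sTerm
      rw [hd k hk]
      congr 2
      exact Finset.sum_congr rfl fun j hj => hd j (by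
        rw [Finset.mem_range] at hj; omega)
    · exact Finset.sum_congr rfl fun j hj => hd j (Finset.mem_range.mp hj)
  have hval : ∀ d : ℕ → ℕ, sValid s d → (∀ k < n, d k = c k) →
      sVal s d = gPart s n c + (1/(s:ℝ)^A) * sVal s (fun m => d (n + m)) := by
    intro d hdv hdp
    rw [sVal_split hs hdv n, (hterm_pre d hdp).2]
    congr 1
    exact Finset.sum_congr rfl (hterm_pre d hdp).1
  set c' : ℕ → ℕ := fun k => if k < n then c k else s - 1 with hc'
  have hvalid' : sValid s c' := by
    intro k
    by_cases h : k < n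
    · simpa [hc', h] using hc k h
    · simp only [hc', if_neg h]
      omega
  have hshift' : (fun m => c' (n + m)) = (fun _ => s - 1) := by
    funext m
    simp only [hc']
    rw [if_neg (by omega)]
  have hval' : sVal s c' = gPart s n c + (1/(s:ℝ)^A) * L := by
    rw [hval c' hvalid' (fun k hk => if_pos hk), hshift', sVal_const hs]
  refine ⟨⟨⟨c', hvalid', fun k hk => if_pos hk, by rw [hval', htarget]⟩, ?_⟩, by rw [htarget, hval']⟩
  rintro x ⟨d, hdv, hdp, rfl⟩
  rw [hval d hdv hdp, htarget]
  have hge : L ≤ sVal s (fun m => d (n + m)) :=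
    sVal_ge hs (fun m => hdv (n + m))
  have hpos : (0:ℝ) ≤ 1/(s:ℝ)^A := by positivity
  nlinarith [mul_le_mul_of_nonneg_left hge hpos]
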